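/- arXiv:1903.04257 — 2 statements merged into one kernel-verified Lean document; each statement's English description precedes it below -/
import Mathlib

section
/- Let σ_S > 0, σ_μ ≥ 0, λ ≥ 0, ρ ∈ [-1,1], and set k = λ²σ_S² + 2σ_S σ_μ λ ρ + σ_μ², k₁ = √k σ_S + (λσ_S² + σ_S σ_μ ρ), k₂ = -√k σ_S + (λσ_S² + σ_S σ_μ ρ). Assume k > 0 and k₁ exp(2√k t/σ_S) ≠ k₂ for all t ≥ 0. Then the function Σ̂(t) = √k σ_S (k₁ exp(2(√k/σ_S)t) + k₂)/(k₁ exp(2(√k/σ_S)t) − k₂) − (λ + σ_μ ρ/σ_S) σ_S² satisfies the Riccati ODE dΣ̂/dt = −Σ̂²/σ_S² + (−2σ_μρ/σ_S − 2λ)Σ̂ + (1−ρ²)σ_μ². -/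
/-- The explicit conditional variance of the Kalman–Bucy filter satisfies the Riccati ODE. -/
theorem kalman_bucy_variance_riccati
    (σS σμ lam ρ : ℝ) (hσS : 0 < σS) (hσμ : 0 ≤ σμ) (hlam : 0 ≤ lam)
    (hρ : ρ ∈ Set.Icc (-1 : ℝ) 1)
    (k k₁ k₂ : ℝ)
    (hk : k = lam ^ 2 * σS ^ 2 + 2 * σS * σμ * lam * ρ + σμ ^ 2)
    (hk₁ : k₁ = Real.sqrt k * σS + (lam * σS ^ 2 + σS * σμ * ρ))
    (hk₂ : k₂ = -Real.sqrt k * σS + (lam * σS ^ 2 + σS * σμ * ρ))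
    (hkpos : 0 < k)
    (hden : ∀ t : ℝ, 0 ≤ t → k₁ * Real.exp (2 * (Real.sqrt k / σS) * t) - k₂ ≠ 0)
    (Sig : ℝ → ℝ)
    (hSig : ∀ t : ℝ, Sig t =
        Real.sqrt k * σS * (k₁ * Real.exp (2 * (Real.sqrt k / σS) * t) + k₂) /
          (k₁ * Real.exp (2 * (Real.sqrt k / σS) * t) - k₂)
        - (lam + σμ * ρ / σS) * σS ^ 2) :
    ∀ t : ℝ, 0 ≤ t →
      HasDerivAt Sig
        (-(Sig t) ^ 2 / σS ^ 2 + (-(2 * σμ * ρ) / σS - 2 * lam) * Sig t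
          + (1 - ρ ^ 2) * σμ ^ 2) t := by
  intro t ht
  have hσ : σS ≠ 0 := hσS.ne'
  set s := Real.sqrt k with hsdef
  have hs : s ^ 2 = k := Real.sq_sqrt hkpos.le
  set E := Real.exp (2 * (s / σS) * t) with hE
  have hD : k₁ * E - k₂ ≠ 0 := hden t ht
  have hfun : Sig = fun u => s * σS * ((k₁ * Real.exp (2 * (s / σS) * u) + k₂) /
      (k₁ * Real.exp (2 * (s / σS) * u) - k₂)) - (lam + σμ * ρ / σS) * σS ^ 2 := by
    funext u
    rw [hSig u]
    ring
  have hexp : HasDerivAt (fun u : ℝ => Real.exp (2 * (s / σS) * u)) ((2 * (s / σS)) * E) t := by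
    simpa [hE, mul_comm] using ((hasDerivAt_id t).const_mul (2 * (s / σS))).exp
  have hnum : HasDerivAt (fun u => k₁ * Real.exp (2 * (s / σS) * u) + k₂)
      (k₁ * ((2 * (s / σS)) * E)) t := (hexp.const_mul k₁).add_const k₂
  have hden' : HasDerivAt (fun u => k₁ * Real.exp (2 * (s / σS) * u) - k₂)
      (k₁ * ((2 * (s / σS)) * E)) t := (hexp.const_mul k₁).sub_const k₂
  have hdiv := (hnum.div hden' hD).const_mul (s * σS)
  have hfull := hdiv.sub_const ((lam + σμ * ρ / σS) * σS ^ 2)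
  rw [hfun]
  convert hfull using 1
  case e'_4 => rfl
  case e'_5 => rfl
  case e'_8 => rfl
  beta_reduce
  rw [← hE]
  have hrel : s ^ 2 = lam ^ 2 * σS ^ 2 + 2 * σS * σμ * lam * ρ + σμ ^ 2 := hs.trans hk
  set X := lam * σS ^ 2 + σS * σμ * ρ with hX
  have hX2 : X ^ 2 + (1 - ρ ^ 2) * σμ ^ 2 * σS ^ 2 = s ^ 2 * σS ^ 2 := by
    rw [hX]; linear_combination (-σS ^ 2) * hrel
  rw [show (-(2 * σμ * ρ) / σS - 2 * lam) = -(2 * X) / σS ^ 2 from by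
    rw [hX]; field_simp; ring]
  rw [show (lam + σμ * ρ / σS) * σS ^ 2 = X from by rw [hX]; field_simp]
  subst hk₁ hk₂
  have hD2 : (s * σS + X) * E - (-(s * σS) + X) ≠ 0 := by
    simpa using hD
  field_simp [hD2]
  linear_combination (((s * σS + X) * E - (-(s * σS) + X)) ^ 2) * hX2
end

section
/- Let α, δ : [k,T] → ℝ be continuous nonnegative functions, z ≥ 0, and let c : [k,T] → ℝ be a continuous function. Define Z_t = z e^{−∫_k^t α(u)du} + ∫_k^t δ(u) e^{−∫_u^t α(s)ds} c_u du. If c_t ≥ Z_t for all t ∈ [k,T], then c_t ≥ z exp(∫_k^t (δ(v) − α(v)) dv) for all t ∈ [k,T]. -/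
/-- Addictive habit constraint implies consumption dominates the subsistence path. -/
theorem habit_constraint_subsistence
    (k T : ℝ) (hkT : k ≤ T) (α δ c : ℝ → ℝ)
    (hα : ContinuousOn α (Set.Icc k T)) (hδ : ContinuousOn δ (Set.Icc k T))
    (hc : ContinuousOn c (Set.Icc k T))
    (hαpos : ∀ t ∈ Set.Icc k T, 0 ≤ α t)
    (hδpos : ∀ t ∈ Set.Icc k T, 0 ≤ δ t)
    (z : ℝ) (hz : 0 ≤ z) (Z : ℝ → ℝ)
    (hZ : ∀ t ∈ Set.Icc k T,
      Z t = z * Real.exp (-∫ u in k..t, α u)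
        + ∫ u in k..t, δ u * Real.exp (-∫ s in u..t, α s) * c u)
    (hcZ : ∀ t ∈ Set.Icc k T, Z t ≤ c t) :
    ∀ t ∈ Set.Icc k T, z * Real.exp (∫ v in k..t, (δ v - α v)) ≤ c t := by
  set A : ℝ → ℝ := fun t => ∫ u in k..t, α u with hAdef
  set D : ℝ → ℝ := fun t => ∫ u in k..t, δ u with hDdef
  set g : ℝ → ℝ := fun u => δ u * Real.exp (A u) * c u with hgdef
  set G : ℝ → ℝ := fun t => z + ∫ u in k..t, g u with hGdef
  set F : ℝ → ℝ := fun t => G t * Real.exp (-D t) with hFdef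
  have hIccU : Set.uIcc k T = Set.Icc k T := Set.uIcc_of_le hkT
  have hsub : ∀ a b : ℝ, a ∈ Set.Icc k T → b ∈ Set.Icc k T →
      Set.uIcc a b ⊆ Set.Icc k T := fun a b ha hb => Set.uIcc_subset_Icc ha hb
  have hint : ∀ (f : ℝ → ℝ), ContinuousOn f (Set.Icc k T) → ∀ a b,
      a ∈ Set.Icc k T → b ∈ Set.Icc k T →
      IntervalIntegrable f MeasureTheory.volume a b := by
    intro f hf a b ha hb
    exact (hf.mono (hsub a b ha hb)).intervalIntegrable
  have hkmem : k ∈ Set.Icc k T := Set.left_mem_Icc.2 hkT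
  -- continuity of primitives
  have hAcont : ContinuousOn A (Set.Icc k T) := by
    rw [← hIccU]
    exact intervalIntegral.continuousOn_primitive_interval
      ((hα.mono hIccU.le).integrableOn_compact isCompact_uIcc |>.mono_set le_rfl)
  have hDcont : ContinuousOn D (Set.Icc k T) := by
    rw [← hIccU]
    exact intervalIntegral.continuousOn_primitive_interval
      ((hδ.mono hIccU.le).integrableOn_compact isCompact_uIcc |>.mono_set le_rfl)
  have hgcont : ContinuousOn g (Set.Icc k T) :=
    (hδ.mul (Real.continuous_exp.comp_continuousOn hAcont)).mul hc
  have hGcont : ContinuousOn G (Set.Icc k T) := by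
    apply continuousOn_const.add
    rw [← hIccU]
    exact intervalIntegral.continuousOn_primitive_interval
      ((hgcont.mono hIccU.le).integrableOn_compact isCompact_uIcc)
  have hFcont : ContinuousOn F (Set.Icc k T) :=
    hGcont.mul (Real.continuous_exp.comp_continuousOn hDcont.neg)
  -- key identity : Z t = exp (-A t) * G t
  have hZG : ∀ t ∈ Set.Icc k T, Z t = Real.exp (-A t) * G t := by
    intro t ht
    have hkt : k ≤ t := ht.1
    have h1 : (∫ u in k..t, δ u * Real.exp (-∫ s in u..t, α s) * c u)
        = ∫ u in k..t, Real.exp (-A t) * g u := by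
      apply intervalIntegral.integral_congr
      intro u hu
      rw [Set.uIcc_of_le hkt] at hu
      have hu' : u ∈ Set.Icc k T := ⟨hu.1, le_trans hu.2 ht.2⟩
      have h2 : (∫ s in u..t, α s) = A t - A u := by
        rw [hAdef]
        exact (intervalIntegral.integral_interval_sub_left
          (hint α hα k t hkmem ht) (hint α hα k u hkmem hu')).symm
      show δ u * Real.exp (-∫ s in u..t, α s) * c u = Real.exp (-A t) * g u
      rw [h2, neg_sub, Real.exp_sub, hgdef, Real.exp_neg, div_eq_mul_inv]
      ring
    rw [hZ t ht, h1, intervalIntegral.integral_const_mul, hGdef]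
    ring
  -- derivative facts at interior points
  have hderiv : ∀ t ∈ Set.Ioo k T, HasDerivAt F
      (Real.exp (-D t) * (g t - δ t * G t)) t := by
    intro t ht
    have htIcc : t ∈ Set.Icc k T := Set.Ioo_subset_Icc_self ht
    have hmeasα : StronglyMeasurableAtFilter α (nhds t) MeasureTheory.volume :=
      (hα.mono Set.Ioo_subset_Icc_self).stronglyMeasurableAtFilter isOpen_Ioo t ht
    have hmeasδ : StronglyMeasurableAtFilter δ (nhds t) MeasureTheory.volume :=
      (hδ.mono Set.Ioo_subset_Icc_self).stronglyMeasurableAtFilter isOpen_Ioo t ht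
    have hmeasg : StronglyMeasurableAtFilter g (nhds t) MeasureTheory.volume :=
      (hgcont.mono Set.Ioo_subset_Icc_self).stronglyMeasurableAtFilter isOpen_Ioo t ht
    have hIoo_nhds : Set.Ioo k T ∈ nhds t := isOpen_Ioo.mem_nhds ht
    have hcontδ : ContinuousAt δ t :=
      ((hδ.mono Set.Ioo_subset_Icc_self) t ht).continuousAt hIoo_nhds
    have hcontg : ContinuousAt g t :=
      ((hgcont.mono Set.Ioo_subset_Icc_self) t ht).continuousAt hIoo_nhds
    have hD' : HasDerivAt D (δ t) t :=
      intervalIntegral.integral_hasDerivAt_right (hint δ hδ k t hkmem htIcc) hmeasδ hcontδ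
    have hG' : HasDerivAt G (g t) t := by
      have := intervalIntegral.integral_hasDerivAt_right
        (hint g hgcont k t hkmem htIcc) hmeasg hcontg
      simpa [hGdef] using (this.const_add z)
    have hE' : HasDerivAt (fun s => Real.exp (-D s)) (Real.exp (-D t) * (-δ t)) t := by
      have := (hD'.neg).exp
      simpa using this
    have := hG'.mul hE'
    refine this.congr_deriv ?_
    ring
  have hFmono : MonotoneOn F (Set.Icc k T) := by
    apply monotoneOn_of_deriv_nonneg (convex_Icc k T) hFcont
    · intro x hx
      rw [interior_Icc] at hx
      exact (hderiv x hx).differentiableAt.differentiableWithinAt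
    · intro x hx
      rw [interior_Icc] at hx
      have hxIcc : x ∈ Set.Icc k T := Set.Ioo_subset_Icc_self hx
      rw [(hderiv x hx).deriv]
      have h1 : G x ≤ Real.exp (A x) * c x := by
        have := hcZ x hxIcc
        rw [hZG x hxIcc] at this
        calc G x = Real.exp (A x) * (Real.exp (-A x) * G x) := by
              rw [← mul_assoc, ← Real.exp_add]; simp
          _ ≤ Real.exp (A x) * c x := by
              apply mul_le_mul_of_nonneg_left this (Real.exp_pos _).le
      have h2 : 0 ≤ g x - δ x * G x := by
        have hδx := hδpos x hxIcc
        have : δ x * G x ≤ δ x * (Real.exp (A x) * c x) :=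
          mul_le_mul_of_nonneg_left h1 hδx
        have hgx : g x = δ x * (Real.exp (A x) * c x) := by rw [hgdef]; ring
        linarith
      positivity
  -- conclude
  intro t ht
  have hkt : k ≤ t := ht.1
  have hFk : F k = z := by
    simp [hFdef, hGdef, hDdef, hAdef, intervalIntegral.integral_same]
  have hFt : z ≤ F t := by
    rw [← hFk]; exact hFmono hkmem ht hkt
  have hGt : z * Real.exp (D t) ≤ G t := by
    have := mul_le_mul_of_nonneg_right hFt (Real.exp_pos (D t)).le
    rw [hFdef] at this
    simp only [mul_assoc, ← Real.exp_add] at this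
    simpa using this
  have hsplit : (∫ v in k..t, (δ v - α v)) = D t - A t := by
    rw [hDdef, hAdef]
    exact intervalIntegral.integral_sub (hint δ hδ k t hkmem ht) (hint α hα k t hkmem ht)
  rw [hsplit]
  have h3 : Real.exp (-A t) * (z * Real.exp (D t)) ≤ Real.exp (-A t) * G t :=
    mul_le_mul_of_nonneg_left hGt (Real.exp_pos _).le
  calc z * Real.exp (D t - A t) = Real.exp (-A t) * (z * Real.exp (D t)) := by
        rw [Real.exp_sub, Real.exp_neg]; ring
    _ ≤ Real.exp (-A t) * G t := h3
    _ = Z t := (hZG t ht).symm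
    _ ≤ c t := hcZ t ht
end
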